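/- For the system in ℝ⁵ given by ẋ₁ = u, ẋ₂ = x₂, ẋ₃ = x₄x₅ − x₃, ẋ₄ = x₅ − x₁², ẋ₅ = x₁x₂ − x₂², with f₁ = e₁, L = diag(0,1,−1,0,0) + E₄₅ and quadratic part Φ(x) = (0, 0, x₄x₅, −x₁², x₁x₂ − x₂²), the subspace sequence S₀ = span{e₁}, S_{λ+1} = S_λ + span{Lω, Φ(ω) : ω ∈ S_λ} stabilizes with S₄ = span{e₁, e₄} ≠ ℝ⁵. -/
import Mathlib


/-- S₀, S_{λ+1} = S_λ + span{Lω, Φ(ω) : ω ∈ S_λ}. -/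
def SseqLPhi {n : ℕ} (L : (Fin n → ℝ) →ₗ[ℝ] (Fin n → ℝ))
    (Φ : (Fin n → ℝ) → (Fin n → ℝ)) (S0 : Submodule ℝ (Fin n → ℝ)) :
    ℕ → Submodule ℝ (Fin n → ℝ)
  | 0 => S0
  | l + 1 => SseqLPhi L Φ S0 l ⊔
      Submodule.span ℝ ((L '' (SseqLPhi L Φ S0 l)) ∪ (Φ '' (SseqLPhi L Φ S0 l)))

lemma memT_iff (x : Fin 5 → ℝ) :
    x ∈ Submodule.span ℝ {(Pi.single 0 1 : Fin 5 → ℝ), (Pi.single 3 1 : Fin 5 → ℝ)} ↔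
      x 1 = 0 ∧ x 2 = 0 ∧ x 4 = 0 := by
  rw [Submodule.mem_span_pair]
  constructor
  · rintro ⟨a, b, rfl⟩
    simp [Pi.single_apply]
  · rintro ⟨h1, h2, h4⟩
    refine ⟨x 0, x 3, ?_⟩
    funext i
    fin_cases i <;> simp [Pi.single_apply, h1, h2, h4]

/-- For the 5-dimensional example with L = diag(0,1,−1,0,0)+E₄₅,
Φ(x) = (0,0,x₄x₅,−x₁²,x₁x₂−x₂²), f₁ = e₁: S₄ = span{e₁,e₄} ≠ ℝ⁵. -/
theorem example_not_accessible
    (L : (Fin 5 → ℝ) →ₗ[ℝ] (Fin 5 → ℝ))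
    (hL : ∀ x, L x = ![0, x 1, -x 2, x 4, 0])
    (Φ : (Fin 5 → ℝ) → (Fin 5 → ℝ))
    (hΦ : ∀ x, Φ x = ![0, 0, x 3 * x 4, -(x 0 ^ 2), x 0 * x 1 - x 1 ^ 2]) :
    SseqLPhi L Φ (Submodule.span ℝ {(Pi.single 0 1 : Fin 5 → ℝ)}) 4 =
      Submodule.span ℝ {(Pi.single 0 1 : Fin 5 → ℝ), (Pi.single 3 1 : Fin 5 → ℝ)} ∧
    SseqLPhi L Φ (Submodule.span ℝ {(Pi.single 0 1 : Fin 5 → ℝ)}) 4 ≠ ⊤ := by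
  set e0 : Fin 5 → ℝ := Pi.single 0 1 with he0
  set e3 : Fin 5 → ℝ := Pi.single 3 1 with he3
  set T : Submodule ℝ (Fin 5 → ℝ) := Submodule.span ℝ {e0, e3} with hT
  set S0 : Submodule ℝ (Fin 5 → ℝ) := Submodule.span ℝ {e0} with hS0
  -- e0 coordinates
  have he0c : e0 1 = 0 ∧ e0 2 = 0 ∧ e0 4 = 0 := by
    simp [he0, Pi.single_apply]
  -- S₁ = T
  have hS1 : SseqLPhi L Φ S0 1 = T := by
    show S0 ⊔ Submodule.span ℝ ((L '' S0) ∪ (Φ '' S0)) = T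
    apply le_antisymm
    · apply sup_le
      · exact Submodule.span_mono (by simp)
      · rw [Submodule.span_le]
        rintro y (⟨x, hx, rfl⟩ | ⟨x, hx, rfl⟩) <;>
        · rw [SetLike.mem_coe, memT_iff]
          obtain ⟨c, rfl⟩ := Submodule.mem_span_singleton.mp hx
          rw [he0]
          refine ⟨?_, ?_, ?_⟩ <;> simp [hL, hΦ, Pi.single_apply]
    · rw [hT, Submodule.span_le]
      rintro y (rfl | rfl)
      · exact Submodule.mem_sup_left (Submodule.mem_span_singleton_self _)
      · apply Submodule.mem_sup_right
        have hΦe0 : Φ e0 = (-1 : ℝ) • e3 := by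
          rw [hΦ]
          funext i
          fin_cases i <;> simp [he0, he3, Pi.single_apply]
        have : Φ e0 ∈ Submodule.span ℝ ((L '' S0) ∪ (Φ '' S0)) := by
          apply Submodule.subset_span
          exact Or.inr ⟨e0, Submodule.mem_span_singleton_self _, rfl⟩
        have h3 : e3 = (-1 : ℝ) • Φ e0 := by rw [hΦe0]; module
        rw [h3]
        exact Submodule.smul_mem _ _ this
  -- step lemma: T is fixed
  have hstep : ∀ l, SseqLPhi L Φ S0 l = T → SseqLPhi L Φ S0 (l + 1) = T := by
    intro l hl
    show SseqLPhi L Φ S0 l ⊔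
      Submodule.span ℝ ((L '' (SseqLPhi L Φ S0 l)) ∪ (Φ '' (SseqLPhi L Φ S0 l))) = T
    rw [hl]
    refine sup_eq_left.mpr ?_
    rw [Submodule.span_le]
    rintro y (⟨x, hx, rfl⟩ | ⟨x, hx, rfl⟩) <;>
    · rw [SetLike.mem_coe] at hx ⊢
      rw [memT_iff] at hx ⊢
      obtain ⟨h1, h2, h4⟩ := hx
      refine ⟨?_, ?_, ?_⟩ <;> simp [hL, hΦ, h1, h2, h4]
  have hS4 : SseqLPhi L Φ S0 4 = T := hstep 3 (hstep 2 (hstep 1 hS1))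
  refine ⟨hS4, ?_⟩
  rw [hS4]
  intro h
  have : (Pi.single 1 1 : Fin 5 → ℝ) ∈ T := h ▸ Submodule.mem_top
  rw [hT, memT_iff] at this
  simp at this
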